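/- Let m be a positive integer, G an edge-weighted complete graph in which every edge joining two vertices of weight at least m has weight at least 1, and S a nonempty subset of V(G). Then G[S] contains an m-independent set of size at least ⌈|S|·f_m(x)⌉ where x = (1/|S|)·∑_{u∈S} wt_G(u) and f_m is as defined by f_m(x)=1−x/(2m) for x≤m, f_m(x)=(m+1)/(2x+2) for x≥m. -/

import Mathlib

noncomputable def FF (μ x : ℝ) : ℝ := if x ≤ μ then 1 - x / (2 * μ) else (μ + 1) / (2 * x + 2)

lemma FF_of_le {μ x : ℝ} (h : x ≤ μ) : FF μ x = 1 - x / (2 * μ) := if_pos h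

lemma FF_of_ge {μ x : ℝ} (hμ : 1 ≤ μ) (h : μ ≤ x) : FF μ x = (μ + 1) / (2 * x + 2) := by
  unfold FF
  rcases le_or_gt x μ with h' | h'
  · have hx : x = μ := le_antisymm h' h
    rw [hx, if_pos le_rfl]
    have hμ0 : (0:ℝ) < μ := by linarith
    field_simp
    ring
  · rw [if_neg (not_le.mpr h')]

lemma FF_antitone {μ : ℝ} (hμ : 1 ≤ μ) {x y : ℝ} (h : x ≤ y) : FF μ y ≤ FF μ x := by
  have hμ0 : (0:ℝ) < μ := by linarith
  rcases le_or_gt y μ with hy | hy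
  · rw [FF_of_le hy, FF_of_le (h.trans hy)]
    have : x / (2*μ) ≤ y / (2*μ) := by
      apply div_le_div_of_nonneg_right h -- may need different name
      linarith
    linarith
  · rw [FF_of_ge hμ hy.le]
    rcases le_or_gt x μ with hx | hx
    · rw [FF_of_le hx]
      have h1 : (μ+1)/(2*y+2) ≤ (μ+1)/(2*μ+2) := by
        apply div_le_div_of_nonneg_left (by linarith) (by linarith) (by linarith)
      have h2 : (μ+1)/(2*μ+2) = 1/2 := by field_simp
      have h3 : x / (2*μ) ≤ 1/2 := by
        rw [div_le_iff₀ (by linarith)]; linarith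
      linarith
    · rw [FF_of_ge hμ hx.le]
      apply div_le_div_of_nonneg_left (by linarith) (by linarith) (by linarith)

lemma FF_le_one {μ : ℝ} (hμ : 1 ≤ μ) {x : ℝ} (hx : 0 ≤ x) : FF μ x ≤ 1 := by
  have := FF_antitone hμ hx
  have h0 : FF μ 0 = 1 := by rw [FF_of_le (by linarith)]; simp
  linarith

lemma claimC {μ : ℝ} (hμ : 1 ≤ μ) {w y D : ℝ} (h1 : 1 ≤ w) (hwy : w ≤ y)
    (hyD : y ≤ D) (hmD : μ ≤ D) :
    w * ((μ + 1) / (2 * D * (D + 1))) ≤ FF μ (y - w) - FF μ y := by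
  have hy1 : (1:ℝ) ≤ y := h1.trans hwy
  have hD1 : (1:ℝ) ≤ D := hy1.trans hyD
  have hden : (0:ℝ) < 2 * D * (D + 1) := by nlinarith
  have hμ0 : (0:ℝ) < μ := by linarith
  rcases le_or_gt y μ with hc1 | hc1
  · -- both linear
    rw [FF_of_le hc1, FF_of_le (by linarith : y - w ≤ μ)]
    have key : (μ + 1) / (2 * D * (D + 1)) ≤ 1 / (2 * μ) := by
      rw [div_le_div_iff₀ hden (by linarith)]
      nlinarith
    have h2 : (1 - (y - w) / (2*μ)) - (1 - y / (2*μ)) = w * (1/(2*μ)) := by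
      field_simp
      ring
    rw [h2]
    have hw0 : (0:ℝ) < w := by linarith
    nlinarith [mul_le_mul_of_nonneg_left key hw0.le]
  rcases le_or_gt μ (y - w) with hc2 | hc2
  · -- both cubic
    rw [FF_of_ge hμ hc1.le, FF_of_ge hμ hc2]
    have h2 : (μ+1)/(2*(y-w)+2) - (μ+1)/(2*y+2) = (w*(μ+1)) / ((y-w+1)*(2*y+2)) := by
      rw [div_sub_div _ _ (by linarith : (2*(y-w)+2:ℝ) ≠ 0) (by linarith : (2*y+2:ℝ) ≠ 0)]
      rw [div_eq_div_iff (by nlinarith) (by nlinarith)]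
      ring
    have hkey : (y-w+1)*(2*y+2) ≤ 2*D*(D+1) := by
      nlinarith [mul_nonneg (by linarith : (0:ℝ) ≤ D - (y-w+1)) (by linarith : (0:ℝ) ≤ D+1),
        mul_nonneg (by linarith : (0:ℝ) ≤ y-w+1) (by linarith : (0:ℝ) ≤ D - y)]
    rw [h2, mul_div_assoc' w _ _, div_le_div_iff₀ hden (by nlinarith)]
    nlinarith [mul_nonneg (mul_nonneg (by linarith : (0:ℝ) ≤ w) (by linarith : (0:ℝ) ≤ μ+1)) (by linarith : (0:ℝ) ≤ 2*D*(D+1) - (y-w+1)*(2*y+2))]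
  · -- mixed: y - w < μ < y
    rw [FF_of_ge hμ hc1.le, FF_of_le hc2.le]
    have h2 : (1 - (y-w)/(2*μ)) - (μ+1)/(2*y+2)
        = ((μ - y + w)*(y+1) + (y-μ)*μ) / (2*μ*(y+1)) := by
      field_simp; ring
    rw [h2, mul_div_assoc' w _ _, div_le_div_iff₀ hden (by nlinarith)]
    have hA : (0:ℝ) ≤ μ - y + w := by linarith
    have hB : (0:ℝ) ≤ y - μ := by linarith
    have hP1 : (0:ℝ) ≤ D*(D+1) - μ*(μ+1) := by nlinarith
    rcases le_or_gt (y - μ) 1 with hc3 | hc3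
    · -- small epsilon
      have hQ : (0:ℝ) ≤ D*(D+1) - y*(y+1) := by nlinarith
      have hG : (0:ℝ) ≤ (y-μ)*(1-(y-μ))*(μ+1+(y-μ)) := by
        apply mul_nonneg (mul_nonneg hB (by linarith)) (by linarith)
      nlinarith [mul_nonneg (mul_nonneg (by linarith : (0:ℝ) ≤ w - 1) hP1) (by linarith : (0:ℝ) ≤ y+1),
        mul_nonneg hQ (by nlinarith : (0:ℝ) ≤ (y+1)*(1-(y-μ)) + (y-μ)*μ),
        mul_nonneg hG (by linarith : (0:ℝ) ≤ y+1)]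
    · -- big epsilon
      have hP2 : (0:ℝ) ≤ D*(D+1) - (μ+1)*(y+1) := by nlinarith
      nlinarith [mul_nonneg (mul_nonneg hA hP1) (by linarith : (0:ℝ) ≤ y+1),
        mul_nonneg (mul_nonneg hB hP2) hμ0.le]

lemma tangent {μ p : ℝ} (hμ : 1 ≤ μ) (hp : 0 ≤ p) :
    ∃ s : ℝ, ∀ t : ℝ, 0 ≤ t → FF μ p + s * (t - p) ≤ FF μ t := by
  have hμ0 : (0:ℝ) < μ := by linarith
  rcases le_or_gt p μ with hpμ | hpμ
  · refine ⟨-(1/(2*μ)), fun t ht => ?_⟩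
    have e1 : FF μ p + -(1/(2*μ)) * (t - p) = 1 - t/(2*μ) := by
      rw [FF_of_le hpμ]; field_simp; ring
    rw [e1]
    rcases le_or_gt t μ with h | h
    · rw [FF_of_le h]
    · rw [FF_of_ge hμ h.le]
      have e2 : 1 - t/(2*μ) = (2*μ - t)/(2*μ) := by field_simp
      rw [e2, div_le_div_iff₀ (by linarith) (by linarith)]
      nlinarith [mul_nonneg (by linarith : (0:ℝ) ≤ t - μ) (by linarith : (0:ℝ) ≤ t - μ + 1)]
  · refine ⟨-((μ+1)/(2*(p+1)^2)), fun t ht => ?_⟩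
    have hp1 : (0:ℝ) < p + 1 := by linarith
    have e1 : FF μ p + -((μ+1)/(2*(p+1)^2)) * (t - p) = ((μ+1)*(2*p+1-t))/(2*(p+1)^2) := by
      rw [FF_of_ge hμ hpμ.le]
      rw [show 2*p+2 = 2*(p+1) from by ring]
      field_simp
      ring
    rw [e1]
    rcases le_or_gt t μ with h | h
    · rw [FF_of_le h]
      have e2 : 1 - t/(2*μ) = (2*μ - t)/(2*μ) := by field_simp
      rw [e2, div_le_div_iff₀ (by positivity) (by linarith)]
      have hG0 : (0:ℝ) ≤ 2*(p+1)^2 - (μ+1)*(2*p+1) := by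
        nlinarith [mul_nonneg (by linarith : (0:ℝ) ≤ p - μ) (by linarith : (0:ℝ) ≤ 2*p+1)]
      have hGm : (0:ℝ) ≤ (p+1)^2 - (μ+1)*(2*p+1-μ) := by nlinarith [sq_nonneg (p-μ)]
      have key : μ * ((2*μ - t)*(2*(p+1)^2) - (μ+1)*(2*p+1-t)*(2*μ))
          = (μ-t)*(2*μ*(2*(p+1)^2 - (μ+1)*(2*p+1))) + t*(2*μ*((p+1)^2 - (μ+1)*(2*p+1-μ))) := by
        ring
      nlinarith [mul_nonneg (by linarith : (0:ℝ) ≤ μ - t) (by nlinarith : (0:ℝ) ≤ 2*μ*(2*(p+1)^2 - (μ+1)*(2*p+1))),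
        mul_nonneg ht (by nlinarith : (0:ℝ) ≤ 2*μ*((p+1)^2 - (μ+1)*(2*p+1-μ)))]
    · rw [FF_of_ge hμ h.le]
      rw [div_le_div_iff₀ (by positivity) (by linarith)]
      nlinarith [sq_nonneg (p-t), mul_nonneg (by linarith : (0:ℝ) ≤ μ+1) (sq_nonneg (p-t))]

lemma thmB {V : Type*} [Fintype V] [DecidableEq V] {μ : ℝ} (hμ : 1 ≤ μ)
    (w : V → V → ℝ) (hsymm : ∀ u x, w u x = w x u) (hnonneg : ∀ u x, 0 ≤ w u x)
    (a : V → ℝ) (ha : ∀ v, 0 ≤ a v) (B : Finset V) :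
    (∀ u ∈ B, ∀ x ∈ B, u ≠ x → 1 ≤ w u x) →
    ∃ T, T ⊆ B ∧ (∀ v ∈ T, a v + ∑ x ∈ T.erase v, w v x < μ) ∧
      ∑ v ∈ B, FF μ (a v + ∑ x ∈ B.erase v, w v x) - (∑ v ∈ B, a v)/(2*μ) ≤ (T.card : ℝ) := by
  induction B using Finset.strongInduction with
  | _ B ih =>
    intro hw1
    have hμ0 : (0:ℝ) < μ := by linarith
    set d : V → ℝ := fun v => a v + ∑ x ∈ B.erase v, w v x with hd
    have hd0 : ∀ v, 0 ≤ d v := fun v =>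
      add_nonneg (ha v) (Finset.sum_nonneg fun x _ => hnonneg v x)
    by_cases hex : ∃ u ∈ B, μ ≤ d u
    · -- delete the max-degree vertex
      obtain ⟨u0, hu0B, hu0⟩ := hex
      obtain ⟨u, huB, humax⟩ := Finset.exists_max_image B d ⟨u0, hu0B⟩
      have hDμ : μ ≤ d u := hu0.trans (humax u0 hu0B)
      have hD0 : (0:ℝ) < d u := lt_of_lt_of_le hμ0 hDμ
      set D := d u with hDdef
      set r : ℝ := (μ+1)/(2*D*(D+1)) with hr
      have hr0 : 0 ≤ r := by positivity
      set B' := B.erase u with hB'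
      obtain ⟨T, hTB', hTind, hTbound⟩ := ih B' (Finset.erase_ssubset huB)
        (fun p hp q hq hpq => hw1 p (Finset.mem_of_mem_erase hp) q (Finset.mem_of_mem_erase hq) hpq)
      refine ⟨T, hTB'.trans (Finset.erase_subset _ _), hTind, ?_⟩
      -- split degrees
      have hsplit : ∀ v ∈ B', a v + ∑ x ∈ B.erase v, w v x
          = (a v + ∑ x ∈ B'.erase v, w v x) + w v u := by
        intro v hv
        have hvB : v ∈ B := Finset.mem_of_mem_erase hv
        have hvu : v ≠ u := Finset.ne_of_mem_erase hv
        have humem : u ∈ B.erase v := Finset.mem_erase.mpr ⟨fun h => hvu h.symm, huB⟩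
        rw [hB', Finset.erase_right_comm, add_assoc, Finset.sum_erase_add _ _ humem]
      -- per-vertex gain
      have hper : ∀ v ∈ B', w v u * r ≤ FF μ (a v + ∑ x ∈ B'.erase v, w v x) - FF μ (d v) := by
        intro v hv
        have hvB : v ∈ B := Finset.mem_of_mem_erase hv
        have hvu : v ≠ u := Finset.ne_of_mem_erase hv
        have h1 : 1 ≤ w v u := hw1 v hvB u huB hvu
        have humem : u ∈ B.erase v := Finset.mem_erase.mpr ⟨fun h => hvu h.symm, huB⟩
        have hwy : w v u ≤ d v := by
          have := Finset.single_le_sum (f := fun x => w v x) (fun x _ => hnonneg v x) humem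
          have hav := ha v
          simp only [hd]
          linarith
        have hyD : d v ≤ D := humax v hvB
        have := claimC hμ h1 hwy hyD hDμ
        have heq : d v - w v u = a v + ∑ x ∈ B'.erase v, w v x := by
          have := hsplit v hv
          simp only [hd] at *
          linarith
        rw [heq] at this
        exact this
      -- sum the gains
      have hsum : (∑ v ∈ B', w v u) * r
          ≤ ∑ v ∈ B', (FF μ (a v + ∑ x ∈ B'.erase v, w v x) - FF μ (d v)) := by
        rw [Finset.sum_mul]
        exact Finset.sum_le_sum hper
      have hWsum : ∑ v ∈ B', w v u = D - a u := by
        have : ∑ v ∈ B', w v u = ∑ v ∈ B', w u v := Finset.sum_congr rfl fun v _ => hsymm v u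
        rw [this, hB']
        simp only [hDdef, hd]
        ring
      have hrate : r ≤ 1/(2*μ) := by
        rw [hr, div_le_div_iff₀ (by positivity) (by positivity)]
        nlinarith
      have hFD : FF μ D = D * r := by
        rw [FF_of_ge hμ hDμ, hr]
        field_simp
      have hsplitsum : ∑ v ∈ B, FF μ (d v) = FF μ D + ∑ v ∈ B', FF μ (d v) := by
        rw [hB', hDdef, add_comm, Finset.sum_erase_add _ _ huB]
      have hasum : ∑ v ∈ B, a v = a u + ∑ v ∈ B', a v := by
        rw [hB', add_comm, Finset.sum_erase_add _ _ huB]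
      have hsum_eq : ∑ v ∈ B', (FF μ (a v + ∑ x ∈ B'.erase v, w v x) - FF μ (d v))
          = ∑ v ∈ B', FF μ (a v + ∑ x ∈ B'.erase v, w v x) - ∑ v ∈ B', FF μ (d v) :=
        Finset.sum_sub_distrib _ _
      have hau_rate : a u * r ≤ a u / (2*μ) := by
        have := mul_le_mul_of_nonneg_left hrate (ha u)
        calc a u * r ≤ a u * (1/(2*μ)) := this
          _ = a u / (2*μ) := by ring
      have hsum_d : ∑ v ∈ B, FF μ (a v + ∑ x ∈ B.erase v, w v x) = ∑ v ∈ B, FF μ (d v) := rfl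
      rw [hsum_d, hsplitsum, hasum, hFD]
      clear_value d D r B'
      rw [hsum_eq] at hsum
      rw [hWsum] at hsum
      have expand : (D - a u) * r = D * r - a u * r := by ring
      rw [expand] at hsum
      have habound : (a u + ∑ v ∈ B', a v)/(2*μ) = a u/(2*μ) + (∑ v ∈ B', a v)/(2*μ) := by ring
      rw [habound]
      have t0 : D * r - a u * r ≤ (∑ v ∈ B', FF μ (a v + ∑ x ∈ B'.erase v, w v x)) - ∑ v ∈ B', FF μ (d v) := hsum
      have t1 : D * r + ∑ v ∈ B', FF μ (d v) ≤ a u/(2*μ) + ∑ v ∈ B', FF μ (a v + ∑ x ∈ B'.erase v, w v x) := by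
        linarith [t0, hau_rate]
      have t2 : (∑ v ∈ B', FF μ (a v + ∑ x ∈ B'.erase v, w v x)) - (∑ v ∈ B', a v) / (2 * μ) ≤ (T.card : ℝ) := hTbound
      linarith [t1, t2]
    · -- all degrees small: take everything
      push_neg at hex
      refine ⟨B, Finset.Subset.refl _, ?_, ?_⟩
      · intro v hv
        have h1 : ∑ x ∈ B.erase v, w v x ≤ ∑ x ∈ B.erase v, w v x := le_refl _
        exact lt_of_le_of_lt (le_refl _) (hex v hv)
      · have hle : ∑ v ∈ B, FF μ (a v + ∑ x ∈ B.erase v, w v x) ≤ B.card := by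
          calc ∑ v ∈ B, FF μ (a v + ∑ x ∈ B.erase v, w v x)
              ≤ ∑ v ∈ B, (1:ℝ) := Finset.sum_le_sum fun v _ => FF_le_one hμ (hd0 v)
            _ = B.card := by simp
        have hA : 0 ≤ (∑ v ∈ B, a v)/(2*μ) := by
          apply div_nonneg (Finset.sum_nonneg fun v _ => ha v) (by linarith)
        linarith

lemma thmA {V : Type*} [Fintype V] [DecidableEq V] {μ : ℝ} (hμ : 1 ≤ μ)
    (w : V → V → ℝ) (hsymm : ∀ u x, w u x = w x u) (hnonneg : ∀ u x, 0 ≤ w u x)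
    (wt : V → ℝ) (hwt : ∀ u, wt u = ∑ x ∈ Finset.univ.erase u, w u x)
    (hedge : ∀ u x, u ≠ x → μ ≤ wt u → μ ≤ wt x → 1 ≤ w u x)
    (S : Finset V) :
    ∃ T, T ⊆ S ∧ (∀ v ∈ T, ∑ x ∈ T.erase v, w v x < μ) ∧
      ∑ u ∈ S, FF μ (∑ x ∈ S.erase u, w u x) ≤ (T.card : ℝ) := by
  classical
  have hμ0 : (0:ℝ) < μ := by linarith
  set H := S.filter (fun u => μ ≤ wt u) with hH
  set L := S.filter (fun u => ¬ μ ≤ wt u) with hL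
  have hdisj : Disjoint L H := by
    rw [hL, hH]
    exact Finset.disjoint_filter_filter_not S S (fun u => μ ≤ wt u) |>.symm.symm |>.symm
  have hLS : L ⊆ S := Finset.filter_subset _ _
  have hHS : H ⊆ S := Finset.filter_subset _ _
  have hunion : L ∪ H = S := by
    rw [hL, hH, Finset.union_comm]
    exact Finset.filter_union_filter_not_eq _ S
  set a : V → ℝ := fun v => ∑ x ∈ L, w v x with haa
  have ha : ∀ v, 0 ≤ a v := fun v => Finset.sum_nonneg fun x _ => hnonneg v x
  have hw1 : ∀ u ∈ H, ∀ x ∈ H, u ≠ x → 1 ≤ w u x := by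
    intro u hu x hx hux
    rw [hH, Finset.mem_filter] at hu hx
    exact hedge u x hux hu.2 hx.2
  obtain ⟨TH, hTHH, hTHind, hTHbound⟩ := thmB hμ w hsymm hnonneg a ha H hw1
  have hdisj2 : Disjoint L TH := hdisj.mono_right hTHH
  refine ⟨L ∪ TH, Finset.union_subset hLS (hTHH.trans hHS), ?_, ?_⟩
  · intro v hv
    rcases Finset.mem_union.mp hv with hvL | hvT
    · -- light vertex
      have hwtv : ¬ μ ≤ wt v := (Finset.mem_filter.mp hvL).2
      have hsub : (L ∪ TH).erase v ⊆ Finset.univ.erase v := by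
        intro x hx
        rw [Finset.mem_erase] at hx ⊢
        exact ⟨hx.1, Finset.mem_univ x⟩
      have hle : ∑ x ∈ (L ∪ TH).erase v, w v x ≤ ∑ x ∈ Finset.univ.erase v, w v x :=
        Finset.sum_le_sum_of_subset_of_nonneg hsub (fun x _ _ => hnonneg v x)
      rw [← hwt v] at hle
      push_neg at hwtv
      linarith
    · -- TH vertex
      have hvL : v ∉ L := fun h => (Finset.disjoint_left.mp hdisj2) h hvT
      have herase : (L ∪ TH).erase v = L ∪ TH.erase v := by
        rw [Finset.erase_union_distrib, Finset.erase_eq_of_notMem hvL]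
      rw [herase, Finset.sum_union (hdisj2.mono_right (Finset.erase_subset _ _))]
      exact hTHind v hvT
  · -- counting
    have hself : ∀ v ∈ H, ∑ x ∈ S.erase v, w v x = a v + ∑ x ∈ H.erase v, w v x := by
      intro v hv
      have hvL : v ∉ L := fun h => (Finset.disjoint_left.mp hdisj) h hv
      have : S.erase v = L ∪ H.erase v := by
        rw [← hunion, Finset.erase_union_distrib, Finset.erase_eq_of_notMem hvL]
      rw [this, Finset.sum_union (hdisj.mono_right (Finset.erase_subset _ _))]
    have hlight : ∀ u ∈ L, FF μ (∑ x ∈ S.erase u, w u x) ≤ 1 - (∑ x ∈ H, w u x)/(2*μ) := by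
      intro u hu
      have hwtu : ¬ μ ≤ wt u := (Finset.mem_filter.mp hu).2
      push_neg at hwtu
      have hdle : ∑ x ∈ S.erase u, w u x ≤ wt u := by
        rw [hwt u]
        apply Finset.sum_le_sum_of_subset_of_nonneg
        · intro x hx
          rw [Finset.mem_erase] at hx ⊢
          exact ⟨hx.1, Finset.mem_univ x⟩
        · exact fun x _ _ => hnonneg u x
      have hHle : ∑ x ∈ H, w u x ≤ ∑ x ∈ S.erase u, w u x := by
        apply Finset.sum_le_sum_of_subset_of_nonneg
        · intro x hx
          rw [Finset.mem_erase]
          refine ⟨fun hxu => ?_, hHS hx⟩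
          subst hxu
          exact (Finset.disjoint_left.mp hdisj) hu hx
        · exact fun x _ _ => hnonneg u x
      rw [FF_of_le (by linarith : ∑ x ∈ S.erase u, w u x ≤ μ)]
      have : (∑ x ∈ H, w u x)/(2*μ) ≤ (∑ x ∈ S.erase u, w u x)/(2*μ) := by
        apply div_le_div_of_nonneg_right hHle -- name may differ
        linarith
      linarith
    have hswap : ∑ u ∈ L, ∑ x ∈ H, w u x = ∑ v ∈ H, a v := by
      rw [haa, Finset.sum_comm]
      exact Finset.sum_congr rfl fun v _ => Finset.sum_congr rfl fun u _ => hsymm u v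
    have hsplitS : ∑ u ∈ S, FF μ (∑ x ∈ S.erase u, w u x)
        = ∑ u ∈ L, FF μ (∑ x ∈ S.erase u, w u x) + ∑ u ∈ H, FF μ (∑ x ∈ S.erase u, w u x) := by
      rw [← hunion, Finset.sum_union hdisj]
    have hLbound : ∑ u ∈ L, FF μ (∑ x ∈ S.erase u, w u x)
        ≤ (L.card : ℝ) - (∑ v ∈ H, a v)/(2*μ) := by
      calc ∑ u ∈ L, FF μ (∑ x ∈ S.erase u, w u x)
          ≤ ∑ u ∈ L, (1 - (∑ x ∈ H, w u x)/(2*μ)) := Finset.sum_le_sum hlight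
        _ = (L.card : ℝ) - (∑ u ∈ L, ∑ x ∈ H, w u x)/(2*μ) := by
            rw [Finset.sum_sub_distrib, Finset.sum_const, nsmul_eq_mul, mul_one,
              ← Finset.sum_div]
        _ = (L.card : ℝ) - (∑ v ∈ H, a v)/(2*μ) := by rw [hswap]
    have hHbound : ∑ u ∈ H, FF μ (∑ x ∈ S.erase u, w u x)
        ≤ (TH.card : ℝ) + (∑ v ∈ H, a v)/(2*μ) := by
      have : ∑ u ∈ H, FF μ (∑ x ∈ S.erase u, w u x)
          = ∑ u ∈ H, FF μ (a u + ∑ x ∈ H.erase u, w u x) :=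
        Finset.sum_congr rfl fun v hv => by rw [hself v hv]
      rw [this]
      linarith [hTHbound]
    have hcard : ((L ∪ TH).card : ℝ) = (L.card : ℝ) + (TH.card : ℝ) := by
      rw [Finset.card_union_of_disjoint hdisj2]
      push_cast
      ring
    rw [hsplitS, hcard]
    linarith

theorem stmt_15 (m : ℕ) (hm : 0 < m) (f : ℝ → ℝ)
    (hf : ∀ x : ℝ, f x = if x ≤ m then 1 - x / (2 * m) else (m + 1) / (2 * x + 2))
    (V : Type*) [Fintype V] [DecidableEq V]
    (w : V → V → ℝ) (hsymm : ∀ u x : V, w u x = w x u)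
    (hnonneg : ∀ u x : V, 0 ≤ w u x)
    (wt : V → ℝ) (hwt : ∀ u : V, wt u = ∑ x ∈ Finset.univ.erase u, w u x)
    (hedge : ∀ u x : V, u ≠ x → (m : ℝ) ≤ wt u → (m : ℝ) ≤ wt x → 1 ≤ w u x)
    (S : Finset V) (hS : S.Nonempty) :
    ∃ T : Finset V, T ⊆ S ∧
      (∀ u ∈ T, ∑ x ∈ T.erase u, w u x < m) ∧
      ⌈(S.card : ℝ) * f ((∑ u ∈ S, wt u) / S.card)⌉ ≤ (T.card : ℤ) := by
  have hμ : (1:ℝ) ≤ (m:ℝ) := by exact_mod_cast hm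
  have hfF : ∀ x, f x = FF (m:ℝ) x := fun x => by rw [hf x]; rfl
  obtain ⟨T, hTS, hTind, hTbound⟩ := thmA hμ w hsymm hnonneg wt hwt hedge S
  refine ⟨T, hTS, hTind, ?_⟩
  rw [Int.ceil_le]
  push_cast
  rw [hfF]
  have hwt0 : ∀ u, 0 ≤ wt u := fun u => by
    rw [hwt u]; exact Finset.sum_nonneg fun x _ => hnonneg u x
  have hn0 : (0:ℝ) < S.card := by exact_mod_cast hS.card_pos
  set p : ℝ := (∑ u ∈ S, wt u) / S.card with hp
  have hp0 : 0 ≤ p := div_nonneg (Finset.sum_nonneg fun u _ => hwt0 u) hn0.le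
  obtain ⟨s, hs⟩ := tangent hμ hp0
  have hineq : ∀ u ∈ S, FF (m:ℝ) p + s * (wt u - p) ≤ FF (m:ℝ) (wt u) :=
    fun u _ => hs (wt u) (hwt0 u)
  have hsum := Finset.sum_le_sum hineq
  have hnp : (S.card : ℝ) * p = ∑ u ∈ S, wt u := by
    rw [hp, mul_div_cancel₀ _ (ne_of_gt hn0)]
  have hlhs : ∑ u ∈ S, (FF (m:ℝ) p + s * (wt u - p)) = (S.card : ℝ) * FF (m:ℝ) p := by
    rw [Finset.sum_add_distrib, Finset.sum_const, nsmul_eq_mul, ← Finset.mul_sum,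
      Finset.sum_sub_distrib, Finset.sum_const, nsmul_eq_mul, ← hnp]
    ring
  rw [hlhs] at hsum
  -- monotonicity: FF (wt u) ≤ FF (d_S u)
  have hmono : ∀ u ∈ S, FF (m:ℝ) (wt u) ≤ FF (m:ℝ) (∑ x ∈ S.erase u, w u x) := by
    intro u _
    apply FF_antitone hμ
    rw [hwt u]
    apply Finset.sum_le_sum_of_subset_of_nonneg
    · intro x hx
      rw [Finset.mem_erase] at hx ⊢
      exact ⟨hx.1, Finset.mem_univ x⟩
    · exact fun x _ _ => hnonneg u x
  have hsum2 := Finset.sum_le_sum hmono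
  linarith [hsum, hsum2, hTbound]
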